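/- Let μ < κ be regular cardinals and λ > κ, and assume δ^{<κ} = δ for every regular cardinal δ ∈ (κ, λ). Then there is an order-isomorphism from a dense subset of L(μ, λ)↾[κ, λ) onto a dense subset of Col(μ, κ) × L(κ, λ). -/

import Mathlib

open Ordinal Cardinal Set

/-- A partial function on ordinals, as an `Option`-valued function. -/
abbrev PartFun := Ordinal.{0} → Option Ordinal.{0}

/-- A Laver-collapse condition is a partial function assigning partial functions to ordinals. -/
abbrev LaverFun := Ordinal → Option PartFun

/-- `δ` is a regular cardinal (as an ordinal). -/
def IsRegOrd (δ : Ordinal) : Prop := δ.card.IsRegular ∧ δ.card.ord = δ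

/-- Domain of a partial function. -/
def pdom (g : PartFun) : Set Ordinal := {a | (g a).isSome}

/-- Domain of a Laver condition. -/
def ldom (p : LaverFun) : Set Ordinal := {δ | (p δ).isSome}

/-- An Easton set: bounded below every regular cardinal. -/
def IsEaston (X : Set Ordinal) : Prop := ∀ α, IsRegOrd α → sSup (X ∩ Set.Iio α) < α

/-- Laver condition with bound below `μ` and whose domain consists of regular cardinals in `S`. -/
def IsLaverOn (μ : Ordinal) (S : Set Ordinal) (p : LaverFun) : Prop :=
  (∀ δ ∈ ldom p, IsRegOrd δ ∧ δ ∈ S) ∧ IsEaston (ldom p) ∧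
    ∃ ξ < μ, ∀ δ g, p δ = some g → ∀ a b, g a = some b → a < ξ ∧ b < δ

/-- A condition of the Laver collapse `𝕃(μ, λ)`. -/
def IsLaver (μ lam : Ordinal) (p : LaverFun) : Prop := IsLaverOn μ (Set.Ioo μ lam) p

/-- Extension of partial functions: `g'` extends `g`. -/
def PFunLE (g' g : PartFun) : Prop := ∀ a b, g a = some b → g' a = some b

/-- The Laver collapse order: `p` extends `q`. -/
def LaverLE (p q : LaverFun) : Prop :=
  ∀ δ g, q δ = some g → ∃ g', p δ = some g' ∧ PFunLE g' g

/-- A condition of the collapse `Col(μ, κ)`: a partial function from `μ` to `κ` of size `< μ`. -/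
def IsCol (μ κ : Ordinal) (g : PartFun) : Prop :=
  (∀ a b, g a = some b → a < μ ∧ b < κ) ∧ Cardinal.mk (pdom g) < Cardinal.lift.{1} μ.card

/-! ### Auxiliary machinery -/

/-- Transfinite sum of block lengths `1 + L b` over `b < a`. -/
noncomputable def posF (L : Ordinal.{0} → Ordinal.{0}) (a : Ordinal.{0}) : Ordinal.{0} :=
  Ordinal.bsup.{0,0} a fun b hb => posF L b + 1 + L b
termination_by a
decreasing_by exact hb

theorem posF_def (L : Ordinal → Ordinal) (a : Ordinal) :
    posF L a = Ordinal.bsup.{0,0} a fun b _ => posF L b + 1 + L b := by rw [posF]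

theorem le_posF (L : Ordinal → Ordinal) {b a : Ordinal} (h : b < a) :
    posF L b + 1 + L b ≤ posF L a := by
  rw [posF_def L a]; exact Ordinal.le_bsup _ b h

theorem posF_mono (L : Ordinal → Ordinal) {a a' : Ordinal} (h : a ≤ a') :
    posF L a ≤ posF L a' := by
  rw [posF_def L a]; exact Ordinal.bsup_le fun b hb => le_posF L (hb.trans_le h)

theorem posF_succ (L : Ordinal → Ordinal) (a : Ordinal) :
    posF L (a + 1) = posF L a + 1 + L a := by
  apply le_antisymm
  · rw [posF_def L (a+1)]
    apply Ordinal.bsup_le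
    intro b hb
    rcases lt_or_eq_of_le (by rwa [Ordinal.add_one_eq_succ, Order.lt_succ_iff] at hb) with h | h
    · exact (le_posF L h).trans (le_self_add.trans le_self_add)
    · subst h; exact le_rfl
  · exact le_posF L (by rw [Ordinal.add_one_eq_succ]; exact Order.lt_succ a)

theorem posF_lt (L : Ordinal → Ordinal) {b a : Ordinal} (h : b < a) :
    posF L b < posF L a :=
  lt_of_lt_of_le (lt_of_lt_of_le (by rw [Ordinal.add_one_eq_succ]; exact Order.lt_succ _)
    le_self_add) (le_posF L h)

theorem posF_block_exists (L : Ordinal → Ordinal) {a β : Ordinal} (h : β < posF L a) :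
    ∃ b < a, posF L b ≤ β ∧ β < posF L (b + 1) := by
  classical
  set S : Set Ordinal := {c | β < posF L c} with hS
  have hne : a ∈ S := h
  set c₀ := Ordinal.lt_wf.min S ⟨a, hne⟩ with hc₀
  have hmem : β < posF L c₀ := Ordinal.lt_wf.min_mem S ⟨a, hne⟩
  have hca : c₀ ≤ a := not_lt.mp (fun hh => Ordinal.lt_wf.not_lt_min S hne hh)
  rw [posF_def] at hmem
  obtain ⟨b, hb, hβb⟩ := (Ordinal.lt_bsup _).mp hmem
  refine ⟨b, lt_of_lt_of_le hb hca, ?_, ?_⟩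
  · exact not_lt.mp (fun hh => Ordinal.lt_wf.not_lt_min S hh hb)
  · rwa [posF_succ]

theorem posF_block_unique (L : Ordinal → Ordinal) {b b' β : Ordinal}
    (h1 : posF L b ≤ β) (h2 : β < posF L (b + 1))
    (h1' : posF L b' ≤ β) (h2' : β < posF L (b' + 1)) : b = b' := by
  rcases lt_trichotomy b b' with h | h | h
  · exact absurd (lt_of_lt_of_le h2 ((posF_mono L (by rwa [Ordinal.add_one_eq_succ,
      Order.succ_le_iff])).trans h1')) (lt_irrefl β)
  · exact h
  · exact absurd (lt_of_lt_of_le h2' ((posF_mono L (by rwa [Ordinal.add_one_eq_succ,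
      Order.succ_le_iff])).trans h1)) (lt_irrefl β)

theorem posF_congr {L L' : Ordinal → Ordinal} (a : Ordinal)
    (h : ∀ c < a, L c = L' c) : posF L a = posF L' a := by
  induction a using Ordinal.induction with
  | h a IH =>
    rw [posF_def L a, posF_def L' a]
    congr 1
    funext b hb
    rw [IH b hb (fun c hc => h c (hc.trans hb)), h b hb]

theorem posF_lt_ord {c : Cardinal.{0}} (hc : c.IsRegular) {L : Ordinal → Ordinal} {a : Ordinal}
    (ha : a.card < c) (hL : ∀ b, L b < c.ord) : posF L a < c.ord := by
  induction a using Ordinal.induction with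
  | h a IH =>
    rw [posF_def]
    apply Ordinal.bsup_lt_ord (by rwa [hc.cof_eq])
    intro b hb
    have h1 : posF L b < c.ord := IH b hb ((Ordinal.card_le_card hb.le).trans_lt ha)
    rw [Cardinal.lt_ord, Ordinal.card_add, Ordinal.card_add, Ordinal.card_one]
    exact Cardinal.add_lt_of_lt hc.aleph0_le
      (Cardinal.add_lt_of_lt hc.aleph0_le (Cardinal.lt_ord.mp h1)
        (Cardinal.one_lt_aleph0.trans_le hc.aleph0_le))
      (Cardinal.lt_ord.mp (hL b))

theorem IsRegOrd.pos {α : Ordinal} (h : IsRegOrd α) : 0 < α := by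
  rw [← h.2, Cardinal.lt_ord]
  simpa using h.1.pos

theorem easton_mono {X Y : Set Ordinal} (h : X ⊆ Y) (hY : IsEaston Y) : IsEaston X := by
  intro α hα
  rcases Set.eq_empty_or_nonempty (X ∩ Set.Iio α) with he | hne
  · rw [he, csSup_empty]; exact hα.pos
  · exact lt_of_le_of_lt (csSup_le_csSup ⟨α, fun x hx => hx.2.le⟩ hne
      (Set.inter_subset_inter_left _ h)) (hY α hα)

theorem easton_insert {X : Set Ordinal} (K : Ordinal) (hX : IsEaston X) :
    IsEaston (insert K X) := by
  intro α hα
  by_cases hK : K < α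
  · have h : sSup (insert K X ∩ Set.Iio α) ≤ max K (sSup (X ∩ Set.Iio α)) := by
      apply csSup_le'
      rintro x ⟨hx1 | hx1, hx2⟩
      · exact hx1 ▸ le_max_left _ _
      · have hbdd : BddAbove (X ∩ Set.Iio α) := ⟨α, fun y hy => hy.2.le⟩
        exact (le_csSup hbdd ⟨hx1, hx2⟩).trans (le_max_right _ _)
    exact lt_of_le_of_lt h (max_lt hK (hX α hα))
  · have h : insert K X ∩ Set.Iio α = X ∩ Set.Iio α := by
      ext x
      constructor
      · rintro ⟨hx1 | hx1, hx2⟩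
        · exact absurd (hx1 ▸ hx2) hK
        · exact ⟨hx1, hx2⟩
      · rintro ⟨hx1, hx2⟩; exact ⟨Or.inr hx1, hx2⟩
    rw [h]; exact hX α hα

theorem exists_bound_of_mk_lt {c : Cardinal.{0}} (hc : c.IsRegular) {S : Set Ordinal.{0}}
    (hS : ∀ x ∈ S, x < c.ord) (hmk : Cardinal.mk S < Cardinal.lift.{1} c) :
    ∃ ζ < c.ord, ∀ x ∈ S, x < ζ := by
  haveI : Small.{0} S := Ordinal.bddAbove_iff_small.mp ⟨c.ord, fun x hx => (hS x hx).le⟩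
  set f : Shrink.{0} S → Ordinal.{0} := fun i => ((equivShrink S).symm i).1 with hf
  have hcard : Cardinal.mk (Shrink.{0} S) < c.ord.cof := by
    rw [hc.cof_eq]
    have h2 : Cardinal.lift.{1} (Cardinal.mk (Shrink.{0} S)) = Cardinal.mk S := by
      rw [Cardinal.lift_mk_shrink' (↥S)]; simp
    rw [← Cardinal.lift_lt.{_, 1}, h2]
    exact hmk
  have hsup : iSup f < c.ord := Ordinal.iSup_lt_ord hcard fun i => hS _ ((equivShrink S).symm i).2
  refine ⟨iSup f + 1, ?_, ?_⟩
  · rw [Ordinal.add_one_eq_succ]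
    exact (Cardinal.isSuccLimit_ord hc.aleph0_le).succ_lt hsup
  · intro x hx
    have h3 : x ≤ iSup f := by
      have h4 : f (equivShrink S ⟨x, hx⟩) = x := by simp [hf]
      rw [← h4]
      exact Ordinal.le_iSup f _
    rw [Ordinal.add_one_eq_succ]
    exact lt_of_le_of_lt h3 (Order.lt_succ _)

/-- Property bundle for the coding functions. -/
def DecOK (K lam : Ordinal) (dec : Ordinal → Ordinal → Ordinal → PartFun) : Prop :=
  ∀ δ ℓ : Ordinal, IsRegOrd δ → K < δ → δ < lam → ℓ < K →
    (∀ v < δ, (∀ i, (dec δ ℓ v i).isSome ↔ i < 1 + ℓ) ∧ ∀ i b, dec δ ℓ v i = some b → b < δ) ∧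
    (∀ v < δ, ∀ v' < δ, dec δ ℓ v = dec δ ℓ v' → v = v') ∧
    (∀ f : PartFun, (∀ i, (f i).isSome ↔ i < 1 + ℓ) → (∀ i b, f i = some b → b < δ) →
      ∃ v < δ, dec δ ℓ v = f)

theorem exists_dec (κ : Cardinal.{0}) (hκ : κ.IsRegular) (lam : Ordinal.{0})
    (hpow : ∀ δ : Ordinal, IsRegOrd δ → κ.ord < δ → δ < lam → δ.card ^< κ = δ.card) :
    ∃ dec : Ordinal → Ordinal → Ordinal → PartFun, DecOK κ.ord lam dec := by
  classical
  have hE : ∀ δ ℓ : Ordinal, IsRegOrd δ → κ.ord < δ → δ < lam → ℓ < κ.ord →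
      Nonempty ((Set.Iio δ) ≃ (Set.Iio (1 + ℓ) → Set.Iio δ)) := by
    intro δ ℓ hreg hKδ hδlam hℓ
    have hcard : (1 + ℓ).card < κ := by
      rw [Ordinal.card_add, Ordinal.card_one]
      exact Cardinal.add_lt_of_lt hκ.aleph0_le (Cardinal.one_lt_aleph0.trans_le hκ.aleph0_le)
        (Cardinal.lt_ord.mp hℓ)
    have h3 : δ.card ^ (1 + ℓ).card = δ.card := by
      apply le_antisymm
      · exact (Cardinal.le_powerlt δ.card hcard).trans_eq (hpow δ hreg hKδ hδlam)
      · apply Cardinal.self_le_power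
        rw [Ordinal.card_add, Ordinal.card_one]
        exact self_le_add_right 1 ℓ.card
    apply Cardinal.eq.mp
    rw [← Cardinal.power_def, Ordinal.mk_Iio_ordinal, Ordinal.mk_Iio_ordinal,
      ← Cardinal.lift_power, h3]
  set H : Ordinal → Ordinal → Prop :=
    fun δ ℓ => IsRegOrd δ ∧ κ.ord < δ ∧ δ < lam ∧ ℓ < κ.ord with hH
  set dec : Ordinal → Ordinal → Ordinal → PartFun := fun δ ℓ v i =>
    if h : H δ ℓ ∧ v < δ ∧ i < 1 + ℓ then
      some ((hE δ ℓ h.1.1 h.1.2.1 h.1.2.2.1 h.1.2.2.2).some ⟨v, h.2.1⟩ ⟨i, h.2.2⟩ : Set.Iio δ).1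
    else none with hdec
  refine ⟨dec, ?_⟩
  intro δ ℓ hreg hKδ hδlam hℓ
  have hHd : H δ ℓ := ⟨hreg, hKδ, hδlam, hℓ⟩
  set E := (hE δ ℓ hreg hKδ hδlam hℓ).some with hEdef
  have hdeq : ∀ v (hv : v < δ) i (hi : i < 1 + ℓ),
      dec δ ℓ v i = some (E ⟨v, hv⟩ ⟨i, hi⟩ : Set.Iio δ).1 := by
    intro v hv i hi
    rw [hdec]
    simp only [dif_pos (⟨hHd, hv, hi⟩ : H δ ℓ ∧ v < δ ∧ i < 1 + ℓ)]
    rfl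
  have hdnone : ∀ v i, ¬ i < 1 + ℓ → dec δ ℓ v i = none := by
    intro v i hi
    rw [hdec]
    exact dif_neg (fun h => hi h.2.2)
  refine ⟨?_, ?_, ?_⟩
  · intro v hv
    constructor
    · intro i
      by_cases hi : i < 1 + ℓ
      · rw [hdeq v hv i hi]; simpa using hi
      · rw [hdnone v i hi]; simpa using hi
    · intro i b hb
      by_cases hi : i < 1 + ℓ
      · rw [hdeq v hv i hi] at hb
        exact (Option.some.inj hb) ▸ (E ⟨v, hv⟩ ⟨i, hi⟩).2
      · rw [hdnone v i hi] at hb; exact absurd hb (by simp)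
  · intro v hv v' hv' heq
    have h5 : E ⟨v, hv⟩ = E ⟨v', hv'⟩ := by
      funext i
      apply Subtype.ext
      have h6 := congrFun heq i.1
      rw [hdeq v hv i.1 i.2, hdeq v' hv' i.1 i.2] at h6
      have h7 := Option.some.inj h6
      simpa using h7
    have h8 := E.injective h5
    simpa using congrArg Subtype.val h8
  · intro f hf1 hf2
    have hFv : ∀ i : Set.Iio (1 + ℓ), (f i.1).isSome := fun i => (hf1 i.1).mpr i.2
    set F : Set.Iio (1 + ℓ) → Set.Iio δ := fun i =>
      ⟨(f i.1).getD 0, by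
        obtain ⟨b, hb⟩ := Option.isSome_iff_exists.mp (hFv i)
        rw [hb, Option.getD_some]
        exact hf2 i.1 b hb⟩ with hF
    refine ⟨(E.symm F).1, (E.symm F).2, ?_⟩
    funext i
    by_cases hi : i < 1 + ℓ
    · rw [hdeq _ (E.symm F).2 i hi]
      have h1 : (⟨(E.symm F).1, (E.symm F).2⟩ : Set.Iio δ) = E.symm F := Subtype.ext rfl
      rw [h1, Equiv.apply_symm_apply]
      obtain ⟨b, hb⟩ := Option.isSome_iff_exists.mp (hFv ⟨i, hi⟩)
      simp [hF, hb]
    · rw [hdnone _ i hi]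
      exact (Option.not_isSome_iff_eq_none.mp (fun h => hi ((hf1 i).mp h))).symm

/-- Block lengths read off a partial function. -/
def Lof (s : PartFun) : Ordinal → Ordinal := fun b => (s b).getD 0

open Classical in
/-- The coded concatenation of the blocks `dec δ (Lof s a) (f a)`. -/
noncomputable def sig (dec : Ordinal → Ordinal → Ordinal → PartFun) (δ : Ordinal)
    (s f : PartFun) : PartFun := fun β =>
  if h : ∃ b, (f b).isSome ∧ posF (Lof s) b ≤ β ∧ β < posF (Lof s) (b + 1) then
    dec δ (Lof s h.choose) ((f h.choose).getD 0) (β - posF (Lof s) h.choose)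
  else none

theorem sig_eq_block (dec : Ordinal → Ordinal → Ordinal → PartFun) (δ : Ordinal)
    (s f : PartFun) {b β : Ordinal}
    (hb : (f b).isSome) (h1 : posF (Lof s) b ≤ β) (h2 : β < posF (Lof s) (b + 1)) :
    sig dec δ s f β = dec δ (Lof s b) ((f b).getD 0) (β - posF (Lof s) b) := by
  have hex : ∃ b', (f b').isSome ∧ posF (Lof s) b' ≤ β ∧ β < posF (Lof s) (b' + 1) :=
    ⟨b, hb, h1, h2⟩
  unfold sig
  rw [dif_pos hex]
  have heq : hex.choose = b :=
    posF_block_unique _ hex.choose_spec.2.1 hex.choose_spec.2.2 h1 h2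
  rw [heq]

theorem sig_none (dec : Ordinal → Ordinal → Ordinal → PartFun) (δ : Ordinal)
    (s f : PartFun) {β : Ordinal}
    (h : ¬ ∃ b, (f b).isSome ∧ posF (Lof s) b ≤ β ∧ β < posF (Lof s) (b + 1)) :
    sig dec δ s f β = none := by
  unfold sig; rw [dif_neg h]

theorem offset_lt {L : Ordinal → Ordinal} {b β : Ordinal}
    (h1 : posF L b ≤ β) (h2 : β < posF L (b + 1)) : β - posF L b < 1 + L b := by
  rw [posF_succ, add_assoc] at h2
  rw [← Ordinal.add_sub_cancel_of_le h1] at h2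
  exact (add_lt_add_iff_left _).mp h2

theorem sig_spec {K lam : Ordinal} {dec : Ordinal → Ordinal → Ordinal → PartFun}
    (hdec : DecOK K lam dec) {δ : Ordinal}
    (hreg : IsRegOrd δ) (hKδ : K < δ) (hδlam : δ < lam) (hK0 : 0 < K)
    {s f : PartFun} {ξ : Ordinal}
    (hsv : ∀ a b, s a = some b → b < K)
    (hf : ∀ a, (f a).isSome ↔ a < ξ) (hfv : ∀ a b, f a = some b → b < δ) :
    (∀ β, (sig dec δ s f β).isSome ↔ β < posF (Lof s) ξ) ∧
    (∀ β b, sig dec δ s f β = some b → b < δ) := by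
  have hLK : ∀ b, Lof s b < K := by
    intro b
    unfold Lof
    cases hsb : s b with
    | none => simpa using hK0
    | some v => simpa using hsv b v hsb
  have hnone : ∀ β, ¬ β < posF (Lof s) ξ → sig dec δ s f β = none := by
    intro β hβ
    apply sig_none
    rintro ⟨b, hbs, h1, h2⟩
    have hbξ : b < ξ := (hf b).mp hbs
    have h3 : posF (Lof s) (b + 1) ≤ posF (Lof s) ξ :=
      posF_mono _ (by rw [Ordinal.add_one_eq_succ, Order.succ_le_iff]; exact hbξ)
    exact hβ (h2.trans_le h3)
  have hval : ∀ b, (f b).isSome → (f b).getD 0 < δ := by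
    intro b hb
    obtain ⟨v, hv⟩ := Option.isSome_iff_exists.mp hb
    rw [hv, Option.getD_some]
    exact hfv b v hv
  constructor
  · intro β
    constructor
    · intro hsome
      by_contra hβ
      rw [hnone β hβ] at hsome
      simp at hsome
    · intro hβ
      obtain ⟨b, hbξ, h1, h2⟩ := posF_block_exists _ hβ
      have hbs : (f b).isSome := (hf b).mpr hbξ
      rw [sig_eq_block dec δ s f hbs h1 h2]
      exact ((hdec δ (Lof s b) hreg hKδ hδlam (hLK b)).1 _ (hval b hbs)).1
        (β - posF (Lof s) b) |>.mpr (offset_lt h1 h2)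
  · intro β v hv
    by_cases hβ : β < posF (Lof s) ξ
    · obtain ⟨b, hbξ, h1, h2⟩ := posF_block_exists _ hβ
      have hbs : (f b).isSome := (hf b).mpr hbξ
      rw [sig_eq_block dec δ s f hbs h1 h2] at hv
      exact ((hdec δ (Lof s b) hreg hKδ hδlam (hLK b)).1 _ (hval b hbs)).2 _ _ hv
    · rw [hnone β hβ] at hv
      exact absurd hv (by simp)

theorem total_mono {f f' : PartFun} {ξ ξ' : Ordinal}
    (hf : ∀ a, (f a).isSome ↔ a < ξ) (hf' : ∀ a, (f' a).isSome ↔ a < ξ')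
    (h : PFunLE f' f) : ξ ≤ ξ' ∧ ∀ a < ξ, f' a = f a := by
  constructor
  · by_contra hc
    push_neg at hc
    have h1 : (f ξ').isSome := (hf ξ').mpr hc
    obtain ⟨b, hb⟩ := Option.isSome_iff_exists.mp h1
    have h2 := h ξ' b hb
    have h3 : ξ' < ξ' := (hf' ξ').mp (by rw [h2]; rfl)
    exact lt_irrefl _ h3
  · intro a ha
    have h1 : (f a).isSome := (hf a).mpr ha
    obtain ⟨b, hb⟩ := Option.isSome_iff_exists.mp h1
    rw [hb, h a b hb]

set_option maxHeartbeats 1000000 in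
/-- Lemma 3 (laverproj): for regular `μ < κ`, `λ > κ` with `δ^{<κ} = δ` for all regular
`δ ∈ (κ, λ)`, there is an order-isomorphism from a dense subset of `𝕃(μ, λ) ↾ [κ, λ)`
onto a dense subset of `Col(μ, κ) × 𝕃(κ, λ)`. -/
theorem statement8 (μ κ : Cardinal) (hμ : μ.IsRegular) (hκ : κ.IsRegular) (hμκ : μ < κ)
    (lam : Ordinal) (hlam : κ.ord < lam)
    (hpow : ∀ δ : Ordinal, IsRegOrd δ → κ.ord < δ → δ < lam → δ.card ^< κ = δ.card) :
    ∃ (D : Set LaverFun) (E : Set (PartFun × LaverFun)) (π : LaverFun → PartFun × LaverFun),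
      (∀ p ∈ D, IsLaverOn μ.ord (Set.Ico κ.ord lam) p) ∧
      (∀ p, IsLaverOn μ.ord (Set.Ico κ.ord lam) p → ∃ d ∈ D, LaverLE d p) ∧
      (∀ e ∈ E, IsCol μ.ord κ.ord e.1 ∧ IsLaver κ.ord lam e.2) ∧
      (∀ e : PartFun × LaverFun, IsCol μ.ord κ.ord e.1 → IsLaver κ.ord lam e.2 →
        ∃ e' ∈ E, PFunLE e'.1 e.1 ∧ LaverLE e'.2 e.2) ∧
      (∀ p ∈ D, π p ∈ E) ∧ (∀ e ∈ E, ∃ p ∈ D, π p = e) ∧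
      (∀ p ∈ D, ∀ q ∈ D, (LaverLE p q ↔ PFunLE (π p).1 (π q).1 ∧ LaverLE (π p).2 (π q).2)) := by
  classical
  obtain ⟨dec, hdec⟩ := exists_dec κ hκ lam hpow
  have hregK : IsRegOrd κ.ord := ⟨by rwa [Cardinal.card_ord], by rw [Cardinal.card_ord]⟩
  have hK0 : (0:Ordinal) < κ.ord := hregK.pos
  have hMK : μ.ord < κ.ord := Cardinal.ord_lt_ord.mpr hμκ
  have hMlim : Order.IsSuccLimit μ.ord := Cardinal.isSuccLimit_ord hμ.aleph0_le
  set sF : LaverFun → PartFun := fun p => (p κ.ord).getD (fun _ => none) with hsF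
  set π : LaverFun → PartFun × LaverFun := fun p =>
    (sF p, fun δ => if δ = κ.ord then none
      else (p δ).map (fun f => sig dec δ (sF p) f)) with hπ
  set D : Set LaverFun := {p | (∀ δ ∈ ldom p, IsRegOrd δ ∧ δ ∈ Set.Ico κ.ord lam) ∧
      IsEaston (ldom p) ∧ (p κ.ord).isSome ∧
      ∃ ξ < μ.ord, ∀ δ f, p δ = some f →
        (∀ a, (f a).isSome ↔ a < ξ) ∧ ∀ a b, f a = some b → b < δ} with hD
  -- basic unfolding facts about π
  have hπ1 : ∀ p : LaverFun, ∀ s, p κ.ord = some s → (π p).1 = s := by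
    intro p s h
    simp [hπ, hsF, h]
  have hπ2 : ∀ p : LaverFun, ∀ δ, δ ≠ κ.ord →
      (π p).2 δ = (p δ).map (fun f => sig dec δ (sF p) f) := by
    intro p δ h
    simp [hπ, h]
  have hπ2K : ∀ p : LaverFun, (π p).2 κ.ord = none := by
    intro p; simp [hπ]
  -- facts about members of D
  have hDioo : ∀ p ∈ D, ∀ δ, δ ∈ ldom p → δ ≠ κ.ord →
      IsRegOrd δ ∧ κ.ord < δ ∧ δ < lam := by
    intro p hp δ hδ hne
    obtain ⟨hreg, -, -, -⟩ := hp
    obtain ⟨h1, h2, h3⟩ := hreg δ hδ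
    exact ⟨h1, lt_of_le_of_ne h2 (Ne.symm hne), h3⟩
  refine ⟨D, π '' D, π, ?_, ?_, ?_, ?_, fun p hp => Set.mem_image_of_mem π hp,
    fun e he => he, ?_⟩
  · -- D consists of conditions
    intro p hp
    obtain ⟨hreg, heas, hK, ξ, hξ, hb⟩ := hp
    refine ⟨hreg, heas, ξ, hξ, fun δ f hf a b hab => ?_⟩
    exact ⟨((hb δ f hf).1 a).mp (by rw [hab]; rfl), (hb δ f hf).2 a b hab⟩
  · -- density of D
    intro p hp
    obtain ⟨hreg, heas, ξ, hξ, hb⟩ := hp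
    set d : LaverFun := fun δ => if δ = κ.ord ∨ (p δ).isSome then
        some (fun a => if a < ξ then some ((((p δ).getD (fun _ => none)) a).getD 0) else none)
      else none with hd
    have hmem : ∀ δ, δ ∈ ldom d ↔ (δ = κ.ord ∨ (p δ).isSome) := by
      intro δ
      by_cases h : δ = κ.ord ∨ (p δ).isSome <;> simp [ldom, hd, h]
    have hdD : d ∈ D := by
      refine ⟨?_, ?_, ?_, ξ, hξ, ?_⟩
      · intro δ hδ
        rcases (hmem δ).mp hδ with h | h
        · subst h; exact ⟨hregK, le_rfl, hlam⟩
        · exact hreg δ h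
      · apply easton_mono (Y := insert κ.ord (ldom p))
        · intro δ hδ
          rcases (hmem δ).mp hδ with h | h
          · exact h ▸ Set.mem_insert _ _
          · exact Set.mem_insert_of_mem _ h
        · exact easton_insert _ heas
      · simp [hd]
      · intro δ f hf
        simp only [hd] at hf
        by_cases h : δ = κ.ord ∨ (p δ).isSome
        · rw [if_pos h] at hf
          have hfe := Option.some.inj hf
          have hpos : 0 < δ := by
            rcases h with h | h
            · exact h ▸ hK0
            · exact (hreg δ h).1.pos
          constructor
          · intro a
            simp only [← hfe]
            by_cases ha : a < ξ <;> simp [ha]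
          · intro a b hab
            simp only [← hfe] at hab
            by_cases ha : a < ξ
            · rw [if_pos ha] at hab
              have hb2 := (Option.some.inj hab).symm
              subst hb2
              cases hpδ : p δ with
              | none => simpa [hpδ] using hpos
              | some f₀ =>
                cases hf₀ : f₀ a with
                | none => simpa [hpδ, hf₀] using hpos
                | some c =>
                  simp only [hpδ, hf₀, Option.getD_some]
                  exact (hb δ f₀ hpδ a c hf₀).2
            · rw [if_neg ha] at hab
              exact absurd hab (by simp)
        · rw [if_neg h] at hf
          exact absurd hf (by simp)
    refine ⟨d, hdD, ?_⟩
    intro δ f hf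
    have hds : δ = κ.ord ∨ (p δ).isSome := Or.inr (by rw [hf]; rfl)
    refine ⟨_, by simp only [hd]; rw [if_pos hds], ?_⟩
    intro a b hab
    have haξ : a < ξ := (hb δ f hf a b hab).1
    show (if a < ξ then some ((((p δ).getD (fun _ => none)) a).getD 0) else none) = some b
    rw [if_pos haξ, hf]
    simp [hab]
  · -- elements of E are conditions
    rintro e ⟨p, hp, rfl⟩
    have hpD := hp
    obtain ⟨hreg, heas, hK, ξ, hξ, hb⟩ := hpD
    obtain ⟨s, hs⟩ := Option.isSome_iff_exists.mp hK
    have hstot : ∀ a, (s a).isSome ↔ a < ξ := (hb κ.ord s hs).1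
    have hsv : ∀ a b, s a = some b → b < κ.ord := (hb κ.ord s hs).2
    have hsFs : sF p = s := by simp [hsF, hs]
    constructor
    · -- IsCol
      rw [hπ1 p s hs]
      constructor
      · intro a b hab
        exact ⟨((hstot a).mp (by rw [hab]; rfl)).trans hξ, hsv a b hab⟩
      · have hpd : pdom s = Set.Iio ξ := Set.ext fun a => hstot a
        rw [hpd, Ordinal.mk_Iio_ordinal, Cardinal.card_ord]
        exact Cardinal.lift_lt.mpr (Cardinal.lt_ord.mp hξ)
    · -- IsLaver
      have hsub : ldom (π p).2 ⊆ ldom p := by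
        intro δ hδ
        by_cases h : δ = κ.ord
        · rw [ldom, Set.mem_setOf_eq, h, hπ2K] at hδ
          simp at hδ
        · rw [ldom, Set.mem_setOf_eq, hπ2 p δ h] at hδ
          simpa [ldom] using hδ
      have hmemδ : ∀ δ ∈ ldom (π p).2, δ ≠ κ.ord := by
        intro δ hδ h
        rw [ldom, Set.mem_setOf_eq, h, hπ2K] at hδ
        simp at hδ
      refine ⟨?_, easton_mono hsub heas, posF (Lof s) ξ, ?_, ?_⟩
      · intro δ hδ
        obtain ⟨h1, h2, h3⟩ := hDioo p hp δ (hsub hδ) (hmemδ δ hδ)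
        exact ⟨h1, h2, h3⟩
      · apply posF_lt_ord hκ ((Cardinal.lt_ord.mp hξ).trans hμκ)
        intro b
        unfold Lof
        cases hsb : s b with
        | none => simpa using hK0
        | some v => simpa using hsv b v hsb
      · intro δ g hg a b hab
        have hδK : δ ≠ κ.ord := by
          intro h; rw [h, hπ2K p] at hg; exact absurd hg (by simp)
        rw [hπ2 p δ hδK] at hg
        obtain ⟨f, hpδ, rfl⟩ := Option.map_eq_some_iff.mp hg
        have hδld : δ ∈ ldom p := by
          simp only [ldom, Set.mem_setOf_eq, hpδ, Option.isSome_some]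
        obtain ⟨h1, h2, h3⟩ := hDioo p hp δ hδld hδK
        have hspec := sig_spec hdec h1 h2 h3 hK0 (s := s) hsv (hb δ f hpδ).1 (hb δ f hpδ).2
        rw [hsFs] at hab
        exact ⟨(hspec.1 a).mp (by rw [hab]; rfl), hspec.2 a b hab⟩
  · -- density of E
    rintro ⟨g, q⟩ ⟨hgv, hgmk⟩ ⟨hqreg, hqeas, ξ', hξ'K, hqb⟩
    rw [Cardinal.card_ord] at hgmk
    have hgS : ∀ x ∈ pdom g, x < μ.ord := by
      intro x hx
      obtain ⟨b, hb⟩ := Option.isSome_iff_exists.mp hx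
      exact (hgv x b hb).1
    obtain ⟨ζ, hζM, hζbd⟩ := exists_bound_of_mk_lt hμ hgS hgmk
    set s : PartFun := fun a =>
      if a < ζ then some ((g a).getD 0) else if a = ζ then some ξ' else none with hs
    have hstot : ∀ a, (s a).isSome ↔ a < ζ + 1 := by
      intro a
      by_cases h1 : a < ζ
      · exact iff_of_true (by simp [hs, h1])
          (h1.trans (by rw [Ordinal.add_one_eq_succ]; exact Order.lt_succ ζ))
      · by_cases h2 : a = ζ
        · subst h2
          exact iff_of_true (by simp [hs])
            (by rw [Ordinal.add_one_eq_succ]; exact Order.lt_succ a)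
        · refine iff_of_false (by simp [hs, h1, h2]) ?_
          rw [Ordinal.add_one_eq_succ, Order.lt_succ_iff]
          exact fun hle => h2 (le_antisymm hle (not_lt.mp h1))
    have hsv : ∀ a b, s a = some b → b < κ.ord := by
      intro a b hab
      simp only [hs] at hab
      by_cases h1 : a < ζ
      · rw [if_pos h1] at hab
        have h4 := (Option.some.inj hab).symm
        subst h4
        cases hga : g a with
        | none => simpa [hga] using hK0
        | some c => simp only [hga, Option.getD_some]; exact (hgv a c hga).2
      · rw [if_neg h1] at hab
        by_cases h2 : a = ζ
        · rw [if_pos h2] at hab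
          rw [← Option.some.inj hab]
          exact hξ'K
        · rw [if_neg h2] at hab; exact absurd hab (by simp)
    have hsg : PFunLE s g := by
      intro a b hab
      have h1 : a < ζ := hζbd a (by rw [pdom, Set.mem_setOf_eq, hab]; rfl)
      simp only [hs, if_pos h1, hab, Option.getD_some]
    have hLζ : Lof s ζ = ξ' := by simp [Lof, hs, lt_irrefl]
    have hLK : ∀ a, Lof s a < κ.ord := by
      intro a
      unfold Lof
      cases hsa : s a with
      | none => simpa using hK0
      | some v => simpa using hsv a v hsa
    set piece : Ordinal → Ordinal → PartFun → PartFun := fun δ a f =>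
      fun i => if i < 1 + Lof s a then some ((f (posF (Lof s) a + i)).getD 0) else none
      with hpiece
    set enc : Ordinal → Ordinal → PartFun → Ordinal := fun δ a f =>
      if h : ∃ v, v < δ ∧ dec δ (Lof s a) v = piece δ a f then h.choose else 0 with henc
    have hqv : ∀ δ f, q δ = some f → ∀ i b, f i = some b → b < δ :=
      fun δ f hδ i b hib => (hqb δ f hδ i b hib).2
    have hencspec : ∀ δ f, IsRegOrd δ → κ.ord < δ → δ < lam →
        (∀ i b, f i = some b → b < δ) → ∀ a,
        enc δ a f < δ ∧ dec δ (Lof s a) (enc δ a f) = piece δ a f := by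
      intro δ f hr hKδ hδlam hfv a
      have h0δ : (0:Ordinal) < δ := hK0.trans hKδ
      have hgood1 : ∀ i, ((piece δ a f) i).isSome ↔ i < 1 + Lof s a := by
        intro i
        by_cases hi : i < 1 + Lof s a <;> simp [hpiece, hi]
      have hgood2 : ∀ i b, piece δ a f i = some b → b < δ := by
        intro i b hib
        simp only [hpiece] at hib
        by_cases hi : i < 1 + Lof s a
        · rw [if_pos hi] at hib
          have h4 := (Option.some.inj hib).symm
          subst h4
          cases hfi : f (posF (Lof s) a + i) with
          | none => simpa [hfi] using h0δ
          | some c => simp only [hfi, Option.getD_some]; exact hfv _ c hfi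
        · rw [if_neg hi] at hib; exact absurd hib (by simp)
      obtain ⟨v, hv, hveq⟩ := (hdec δ (Lof s a) hr hKδ hδlam (hLK a)).2.2 _ hgood1 hgood2
      have hex : ∃ v, v < δ ∧ dec δ (Lof s a) v = piece δ a f := ⟨v, hv, hveq⟩
      simp only [henc, dif_pos hex]
      exact ⟨hex.choose_spec.1, hex.choose_spec.2⟩
    set p : LaverFun := fun δ => if δ = κ.ord then some s else
      (q δ).map (fun f => fun a => if a < ζ + 1 then some (enc δ a f) else none) with hp
    have hqmem : ∀ δ f, q δ = some f → IsRegOrd δ ∧ κ.ord < δ ∧ δ < lam := by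
      intro δ f hδ
      have hδld : δ ∈ ldom q := by simp only [ldom, Set.mem_setOf_eq, hδ, Option.isSome_some]
      obtain ⟨h1, h2⟩ := hqreg δ hδld
      exact ⟨h1, h2.1, h2.2⟩
    have hmem : ∀ δ, δ ∈ ldom p ↔ (δ = κ.ord ∨ (q δ).isSome) := by
      intro δ
      by_cases h : δ = κ.ord <;> simp [ldom, hp, h]
    have hpD : p ∈ D := by
      refine ⟨?_, ?_, ?_, ζ + 1, ?_, ?_⟩
      · intro δ hδ
        rcases (hmem δ).mp hδ with h | h
        · subst h; exact ⟨hregK, le_rfl, hlam⟩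
        · obtain ⟨f, hf⟩ := Option.isSome_iff_exists.mp h
          obtain ⟨h1, h2, h3⟩ := hqmem δ f hf
          exact ⟨h1, le_of_lt h2, h3⟩
      · apply easton_mono (Y := insert κ.ord (ldom q))
        · intro δ hδ
          rcases (hmem δ).mp hδ with h | h
          · exact h ▸ Set.mem_insert _ _
          · exact Set.mem_insert_of_mem _ h
        · exact easton_insert _ hqeas
      · simp [hp]
      · rw [Ordinal.add_one_eq_succ]; exact hMlim.succ_lt hζM
      · intro δ f hf
        simp only [hp] at hf
        by_cases h : δ = κ.ord
        · rw [if_pos h] at hf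
          have h4 := Option.some.inj hf
          subst h4
          subst h
          exact ⟨hstot, fun a b hab => hsv a b hab⟩
        · rw [if_neg h] at hf
          obtain ⟨f₀, hf₀, rfl⟩ := Option.map_eq_some_iff.mp hf
          obtain ⟨h1, h2, h3⟩ := hqmem δ f₀ hf₀
          constructor
          · intro a; by_cases ha : a < ζ + 1 <;> simp [ha]
          · intro a b hab
            have hab' : (if a < ζ + 1 then some (enc δ a f₀) else none) = some b := hab
            by_cases ha : a < ζ + 1
            · rw [if_pos ha] at hab'
              rw [← Option.some.inj hab']
              exact (hencspec δ f₀ h1 h2 h3 (hqv δ f₀ hf₀) a).1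
            · rw [if_neg ha] at hab'; exact absurd hab' (by simp)
    have hpK : p κ.ord = some s := by simp [hp]
    have hsFp : sF p = s := by simp [hsF, hpK]
    refine ⟨π p, Set.mem_image_of_mem π hpD, ?_, ?_⟩
    · rw [hπ1 p s hpK]
      exact hsg
    · intro δ f hqδ0
      have hqδ : q δ = some f := hqδ0
      obtain ⟨h1, h2, h3⟩ := hqmem δ f hqδ
      have hδK : δ ≠ κ.ord := h2.ne'
      set f' : PartFun := fun a => if a < ζ + 1 then some (enc δ a f) else none with hf'
      have hpδ : p δ = some f' := by
        simp only [hp, if_neg hδK]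
        rw [hqδ, Option.map_some]
      refine ⟨sig dec δ (sF p) f', by rw [hπ2 p δ hδK, hpδ]; rfl, ?_⟩
      intro β b hfβ
      obtain ⟨hβξ', hbδ⟩ := hqb δ f hqδ β b hfβ
      have hβpos : β < posF (Lof s) (ζ + 1) := by
        rw [posF_succ, hLζ]
        exact hβξ'.trans_le (le_add_self (a := ξ') (b := posF (Lof s) ζ + 1))
      rw [hsFp]
      obtain ⟨b₀, hb₀ξ, hB1, hB2⟩ := posF_block_exists (Lof s) hβpos
      have hb₀ζ : b₀ ≤ ζ := by
        rw [Ordinal.add_one_eq_succ, Order.lt_succ_iff] at hb₀ξ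
        exact hb₀ξ
      have hb₀s : (f' b₀).isSome := by simp [hf', hb₀ξ, hb₀ζ]
      rw [sig_eq_block dec δ s f' hb₀s hB1 hB2]
      have hf'b₀ : (f' b₀).getD 0 = enc δ b₀ f := by simp [hf', hb₀ξ, hb₀ζ]
      rw [hf'b₀, (hencspec δ f h1 h2 h3 (hqv δ f hqδ) b₀).2]
      have hoff : β - posF (Lof s) b₀ < 1 + Lof s b₀ := offset_lt hB1 hB2
      simp only [hpiece, if_pos hoff, Ordinal.add_sub_cancel_of_le hB1, hfβ,
        Option.getD_some]
  · -- order isomorphism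
    intro p hp r hr
    have hpD := hp
    have hrD := hr
    obtain ⟨hregp, heasp, hKp, ξp, hξp, hbp⟩ := hpD
    obtain ⟨hregr, heasr, hKr, ξr, hξr, hbr⟩ := hrD
    obtain ⟨sp, hsp⟩ := Option.isSome_iff_exists.mp hKp
    obtain ⟨sr, hsr⟩ := Option.isSome_iff_exists.mp hKr
    have hsFp : sF p = sp := by simp [hsF, hsp]
    have hsFr : sF r = sr := by simp [hsF, hsr]
    have hsptot := (hbp κ.ord sp hsp).1
    have hspv := (hbp κ.ord sp hsp).2
    have hsrtot := (hbr κ.ord sr hsr).1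
    have hsrv := (hbr κ.ord sr hsr).2
    have hsFrv : ∀ a b, (sF r) a = some b → b < κ.ord := by
      intro a b hab
      rw [hsFr] at hab
      exact hsrv a b hab
    constructor
    · intro h
      obtain ⟨sp', hsp', hext0⟩ := h κ.ord sr hsr
      have hext' : PFunLE sp sr := by
        have e : sp = sp' := Option.some.inj (hsp.symm.trans hsp')
        rw [e]; exact hext0
      have hmono := total_mono hsrtot hsptot hext'
      have hLeq : ∀ c < ξr, Lof (sF p) c = Lof (sF r) c := by
        intro c hc
        rw [hsFp, hsFr]
        unfold Lof
        rw [hmono.2 c hc]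
      have hposeq : ∀ b, b ≤ ξr → posF (Lof (sF p)) b = posF (Lof (sF r)) b :=
        fun b hb => posF_congr b (fun c hc => hLeq c (hc.trans_le hb))
      constructor
      · rw [hπ1 p sp hsp, hπ1 r sr hsr]
        exact hext'
      · intro δ g0 hg0
        have hδK : δ ≠ κ.ord := by
          intro he; rw [he, hπ2K r] at hg0; exact absurd hg0 (by simp)
        rw [hπ2 r δ hδK] at hg0
        obtain ⟨f, hrδ, rfl⟩ := Option.map_eq_some_iff.mp hg0
        obtain ⟨f', hpδ, hfext⟩ := h δ f hrδ
        have hδld : δ ∈ ldom r := by simp only [ldom, Set.mem_setOf_eq, hrδ, Option.isSome_some]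
        obtain ⟨hd1, hd2, hd3⟩ := hDioo r hr δ hδld hδK
        have hftot := (hbr δ f hrδ).1
        have hfv := (hbr δ f hrδ).2
        have hf'tot := (hbp δ f' hpδ).1
        have hfmono := total_mono hftot hf'tot hfext
        refine ⟨sig dec δ (sF p) f', by rw [hπ2 p δ hδK, hpδ]; rfl, ?_⟩
        intro β b hβ
        have hβsome : (sig dec δ (sF r) f β).isSome := by rw [hβ]; rfl
        have hspec := sig_spec hdec hd1 hd2 hd3 hK0 (s := sF r) hsFrv hftot hfv
        have hβlt : β < posF (Lof (sF r)) ξr := (hspec.1 β).mp hβsome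
        obtain ⟨b₀, hb₀, hB1, hB2⟩ := posF_block_exists _ hβlt
        have hb₀s : (f b₀).isSome := (hftot b₀).mpr hb₀
        rw [sig_eq_block dec δ (sF r) f hb₀s hB1 hB2] at hβ
        have hb₀s' : (f' b₀).isSome := (hf'tot b₀).mpr (hb₀.trans_le hfmono.1)
        have hsucc : b₀ + 1 ≤ ξr := by
          rw [Ordinal.add_one_eq_succ, Order.succ_le_iff]; exact hb₀
        have hB1' : posF (Lof (sF p)) b₀ ≤ β := by rw [hposeq b₀ hb₀.le]; exact hB1
        have hB2' : β < posF (Lof (sF p)) (b₀ + 1) := by rw [hposeq (b₀ + 1) hsucc]; exact hB2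
        rw [sig_eq_block dec δ (sF p) f' hb₀s' hB1' hB2', hLeq b₀ hb₀, hfmono.2 b₀ hb₀,
          hposeq b₀ hb₀.le]
        exact hβ
    · rintro ⟨h1, h2⟩
      rw [hπ1 p sp hsp, hπ1 r sr hsr] at h1
      have hmono := total_mono hsrtot hsptot h1
      have hLeq : ∀ c < ξr, Lof (sF p) c = Lof (sF r) c := by
        intro c hc
        rw [hsFp, hsFr]
        unfold Lof
        rw [hmono.2 c hc]
      have hposeq : ∀ b, b ≤ ξr → posF (Lof (sF p)) b = posF (Lof (sF r)) b :=
        fun b hb => posF_congr b (fun c hc => hLeq c (hc.trans_le hb))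
      intro δ f hrδ
      by_cases hδK : δ = κ.ord
      · subst hδK
        have hfsr : f = sr := Option.some.inj (hrδ.symm.trans hsr)
        subst hfsr
        exact ⟨sp, hsp, h1⟩
      · have hg : (π r).2 δ = some (sig dec δ (sF r) f) := by
          rw [hπ2 r δ hδK, hrδ]; rfl
        obtain ⟨g', hg', hgext⟩ := h2 δ _ hg
        have hδld : δ ∈ ldom r := by simp only [ldom, Set.mem_setOf_eq, hrδ, Option.isSome_some]
        obtain ⟨hd1, hd2, hd3⟩ := hDioo r hr δ hδld hδK
        rw [hπ2 p δ hδK] at hg'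
        obtain ⟨f', hpδ, hf'g⟩ := Option.map_eq_some_iff.mp hg'
        rw [← hf'g] at hgext
        refine ⟨f', hpδ, ?_⟩
        have hftot := (hbr δ f hrδ).1
        have hfv := (hbr δ f hrδ).2
        have hf'tot := (hbp δ f' hpδ).1
        have hf'v := (hbp δ f' hpδ).2
        intro a b hab
        have haξr : a < ξr := (hftot a).mp (by rw [hab]; rfl)
        have haξp : a < ξp := haξr.trans_le hmono.1
        have hsucc : a + 1 ≤ ξr := by
          rw [Ordinal.add_one_eq_succ, Order.succ_le_iff]; exact haξr
        have hLaK : Lof (sF r) a < κ.ord := by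
          rw [hsFr]
          unfold Lof
          cases hsa : sr a with
          | none => simpa using hK0
          | some v => simpa using hsrv a v hsa
        have hvδ : (f a).getD 0 < δ := by
          rw [hab, Option.getD_some]; exact hfv a b hab
        obtain ⟨c, hc⟩ := Option.isSome_iff_exists.mp ((hf'tot a).mpr haξp)
        have hv'δ : (f' a).getD 0 < δ := by
          rw [hc, Option.getD_some]; exact hf'v a c hc
        have hdeq : dec δ (Lof (sF r) a) ((f' a).getD 0)
            = dec δ (Lof (sF r) a) ((f a).getD 0) := by
          funext i
          by_cases hi : i < 1 + Lof (sF r) a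
          · have hB1 : posF (Lof (sF r)) a ≤ posF (Lof (sF r)) a + i :=
              le_self_add
            have hB2 : posF (Lof (sF r)) a + i < posF (Lof (sF r)) (a + 1) := by
              rw [posF_succ, add_assoc]
              exact (add_lt_add_iff_left _).mpr hi
            have e1 : sig dec δ (sF r) f (posF (Lof (sF r)) a + i)
                = dec δ (Lof (sF r) a) ((f a).getD 0) i := by
              rw [sig_eq_block dec δ (sF r) f ((hftot a).mpr haξr) hB1 hB2,
                Ordinal.add_sub_cancel]
            have hsome : (dec δ (Lof (sF r) a) ((f a).getD 0) i).isSome :=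
              (((hdec δ (Lof (sF r) a) hd1 hd2 hd3 hLaK).1 _ hvδ).1 i).mpr hi
            have hsome0 : (sig dec δ (sF r) f (posF (Lof (sF r)) a + i)).isSome := by
              rw [e1]; exact hsome
            obtain ⟨w, hw⟩ := Option.isSome_iff_exists.mp hsome0
            have e2 : sig dec δ (sF p) f' (posF (Lof (sF r)) a + i) = some w := hgext _ w hw
            have hB1' : posF (Lof (sF p)) a ≤ posF (Lof (sF r)) a + i := by
              rw [hposeq a haξr.le]; exact hB1
            have hB2' : posF (Lof (sF r)) a + i < posF (Lof (sF p)) (a + 1) := by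
              rw [hposeq (a + 1) hsucc]; exact hB2
            rw [sig_eq_block dec δ (sF p) f' ((hf'tot a).mpr haξp) hB1' hB2',
              hposeq a haξr.le, Ordinal.add_sub_cancel, hLeq a haξr] at e2
            rw [e2, ← hw, e1]
          · have hn1 : dec δ (Lof (sF r) a) ((f' a).getD 0) i = none :=
              Option.not_isSome_iff_eq_none.mp (fun hcon => hi
                ((((hdec δ (Lof (sF r) a) hd1 hd2 hd3 hLaK).1 _ hv'δ).1 i).mp hcon))
            have hn2 : dec δ (Lof (sF r) a) ((f a).getD 0) i = none :=
              Option.not_isSome_iff_eq_none.mp (fun hcon => hi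
                ((((hdec δ (Lof (sF r) a) hd1 hd2 hd3 hLaK).1 _ hvδ).1 i).mp hcon))
            rw [hn1, hn2]
        have hval := (hdec δ (Lof (sF r) a) hd1 hd2 hd3 hLaK).2.1 _ hv'δ _ hvδ hdeq
        rw [hab, Option.getD_some] at hval
        rw [hc, Option.getD_some] at hval
        rw [hc, hval]
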